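/- Let A be a complex symmetric d×d matrix (ᵗA = A) whose real part is positive definite, β ∈ ℂᵈ, and α ∈ ℕᵈ a multi-index with α = 0. Then A is invertible and ∫_{ℝᵈ} exp(-½⟨Ax,x⟩ + β·x) dx = (2π)^{d/2} det(A)^{-1/2} exp(½⟨A⁻¹β,β⟩), where det(A)^{-1/2} is the branch obtained by continuous deformation from the positive square root for positive definite real A. -/

import Mathlib

open scoped Real
open MeasureTheory Matrix Complex

theorem stmt6 {d : ℕ} (A : Matrix (Fin d) (Fin d) ℂ)
    (hsym : A.transpose = A)
    (hre : (A.map Complex.re).PosDef)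
    (β : Fin d → ℂ) :
    IsUnit A ∧
    ∃ s : ℂ, s ^ 2 = (A.det)⁻¹ ∧
      (∫ x : EuclideanSpace ℝ (Fin d),
          Complex.exp (-(1/2) * dotProduct
              (A.mulVec fun i => (x i : ℂ)) (fun i => (x i : ℂ))
            + dotProduct β (fun i => (x i : ℂ))))
        = (((2 * π) ^ ((d : ℝ) / 2) : ℝ) : ℂ) * s *
            Complex.exp ((1/2) * dotProduct (A⁻¹.mulVec β) β) := by
  classical
  set R : Matrix (Fin d) (Fin d) ℝ := A.map Complex.re with hRdef
  -- square root of R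
  open scoped MatrixOrder in
  set Q : Matrix (Fin d) (Fin d) ℝ := CFC.sqrt R with hQdef
  have hQQ : Q * Q = R := by
    open scoped MatrixOrder in
    exact CFC.sqrt_mul_sqrt_self R hre.posSemidef.nonneg
  have hQsym : Qᵀ = Q := by
    rw [← conjTranspose_eq_transpose_of_trivial]
    open scoped MatrixOrder in
    exact (CFC.sqrt_nonneg R).posSemidef.1
  have hRdet : R.det ≠ 0 := ne_of_gt hre.det_pos
  have hQdet : Q.det ≠ 0 := by
    intro h
    rw [← hQQ, det_mul, h, mul_zero] at hRdet
    exact hRdet rfl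
  have hQunit : IsUnit Q.det := isUnit_iff_ne_zero.mpr hQdet
  set W : Matrix (Fin d) (Fin d) ℝ := Q⁻¹ with hWdef
  have hWsym : Wᵀ = W := by rw [hWdef, transpose_nonsing_inv, hQsym]
  have hQW : Q * W = 1 := mul_nonsing_inv Q hQunit
  have hWQ : W * Q = 1 := nonsing_inv_mul Q hQunit
  have hWRW : W * R * W = 1 := by
    rw [← hQQ, ← mul_assoc W Q Q, hWQ, one_mul, hQW]
  -- spectral theorem for S' = W * Im A * W
  set S : Matrix (Fin d) (Fin d) ℝ := A.map Complex.im with hSdef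
  have hSsym : Sᵀ = S := by
    rw [hSdef, ← transpose_map, hsym]
  set S' : Matrix (Fin d) (Fin d) ℝ := W * S * W with hS'def
  have hS' : S'.IsHermitian := by
    rw [Matrix.IsHermitian, conjTranspose_eq_transpose_of_trivial, hS'def,
      transpose_mul, transpose_mul, hSsym, hWsym, mul_assoc]
  set ev : Fin d → ℝ := hS'.eigenvalues with hevdef
  set U : Matrix (Fin d) (Fin d) ℝ := (hS'.eigenvectorUnitary : Matrix (Fin d) (Fin d) ℝ) with hUdef
  have hUspec : S' = U * diagonal ev * Uᵀ := by
    have := hS'.spectral_theorem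
    rw [Unitary.conjStarAlgAut_apply] at this
    rw [← conjTranspose_eq_transpose_of_trivial (A := U)]
    convert this using 2 <;> rfl
  have hUtU : Uᵀ * U = 1 := by
    have := Matrix.mem_unitaryGroup_iff'.mp hS'.eigenvectorUnitary.2
    rw [← conjTranspose_eq_transpose_of_trivial (A := U)]
    exact this
  have hUUt : U * Uᵀ = 1 := by
    have := Matrix.mem_unitaryGroup_iff.mp hS'.eigenvectorUnitary.2
    rw [← conjTranspose_eq_transpose_of_trivial (A := U)]
    exact this
  -- real transformation matrix
  set T : Matrix (Fin d) (Fin d) ℝ := W * U with hTdef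
  have hTRT : Tᵀ * R * T = 1 := by
    rw [hTdef, transpose_mul, hWsym]
    have h1 : Uᵀ * W * R * (W * U) = Uᵀ * (W * R * W) * U := by
      simp only [mul_assoc]
    rw [h1, hWRW, mul_one, hUtU]
  have hTST : Tᵀ * S * T = diagonal ev := by
    rw [hTdef, transpose_mul, hWsym]
    have : Uᵀ * W * S * (W * U) = Uᵀ * (W * S * W) * U := by
      simp only [mul_assoc]
    rw [this, ← hS'def, hUspec]
    calc Uᵀ * (U * diagonal ev * Uᵀ) * U
        = (Uᵀ * U) * diagonal ev * (Uᵀ * U) := by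
          simp only [mul_assoc]
    _ = diagonal ev := by rw [hUtU, one_mul, mul_one]
  have hTdet : T.det ≠ 0 := by
    have hUdet : U.det ≠ 0 := by
      intro h
      have := congrArg Matrix.det hUtU
      rw [det_mul, h, mul_zero, det_one] at this
      exact one_ne_zero this.symm
    have hWdet : W.det ≠ 0 := by
      intro h
      have := congrArg Matrix.det hWQ
      rw [det_mul, h, zero_mul, det_one] at this
      exact one_ne_zero this.symm
    rw [hTdef, det_mul]
    exact mul_ne_zero hWdet hUdet
  -- complexifications
  set Tc : Matrix (Fin d) (Fin d) ℂ := T.map Complex.ofReal with hTcdef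
  set dvec : Fin d → ℂ := fun j => (1 : ℂ) + (ev j : ℂ) * Complex.I with hdvecdef
  set Dc : Matrix (Fin d) (Fin d) ℂ := diagonal dvec with hDcdef
  have hmapmul : ∀ (M N : Matrix (Fin d) (Fin d) ℝ),
      (M * N).map Complex.ofReal = M.map Complex.ofReal * N.map Complex.ofReal := by
    intro M N
    exact Matrix.map_mul (f := Complex.ofRealHom)
  have hA : A = R.map Complex.ofReal + Complex.I • (S.map Complex.ofReal) := by
    ext i j
    simp only [Matrix.add_apply, Matrix.smul_apply, Matrix.map_apply, hRdef, hSdef,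
      smul_eq_mul]
    rw [mul_comm]
    exact (Complex.re_add_im (A i j)).symm
  have hKey : Tcᵀ * A * Tc = Dc := by
    have h1 : Tcᵀ * R.map Complex.ofReal * Tc = 1 := by
      rw [hTcdef, ← transpose_map, ← hmapmul, ← hmapmul, hTRT]
      ext i j
      simp [Matrix.map_apply, Matrix.one_apply, apply_ite Complex.ofReal]
    have h2 : Tcᵀ * S.map Complex.ofReal * Tc = (diagonal ev).map Complex.ofReal := by
      rw [hTcdef, ← transpose_map, ← hmapmul, ← hmapmul, hTST]
    have expand : Tcᵀ * (R.map Complex.ofReal + Complex.I • S.map Complex.ofReal) * Tc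
        = Tcᵀ * R.map Complex.ofReal * Tc + Complex.I • (Tcᵀ * S.map Complex.ofReal * Tc) := by
      rw [mul_add, add_mul, Matrix.mul_smul, Matrix.smul_mul]
    rw [hA, expand, h1, h2]
    ext i j
    by_cases h : i = j
    · subst h
      simp [hDcdef, hdvecdef, Matrix.one_apply, Matrix.map_apply, mul_comm]
    · simp [hDcdef, hdvecdef, Matrix.one_apply, Matrix.map_apply, h]
  have hTcdeteq : Tc.det = Complex.ofReal (T.det) :=
    (RingHom.map_det Complex.ofRealHom T).symm
  have hTcdet : Tc.det ≠ 0 := by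
    rw [hTcdeteq]
    exact Complex.ofReal_ne_zero.mpr hTdet
  have hDcdet : Dc.det ≠ 0 := by
    rw [hDcdef, det_diagonal]
    refine Finset.prod_ne_zero_iff.mpr fun j _ => ?_
    intro h
    have := congrArg Complex.re h
    simp [hdvecdef] at this
  -- determinant relation and invertibility of A
  have hdetA : Tc.det ^ 2 * A.det = Dc.det := by
    have := congrArg Matrix.det hKey
    rw [det_mul, det_mul, det_transpose] at this
    rw [sq]
    calc Tc.det * Tc.det * A.det = Tc.det * A.det * Tc.det := by ring
    _ = Dc.det := this
  have hAdet : A.det ≠ 0 := by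
    intro h
    rw [h, mul_zero] at hdetA
    exact hDcdet hdetA.symm
  have hAunit : IsUnit A := (isUnit_iff_isUnit_det A).mpr (isUnit_iff_ne_zero.mpr hAdet)
  have hTcTunit : IsUnit (Tcᵀ).det := by
    rw [det_transpose]; exact isUnit_iff_ne_zero.mpr hTcdet
  have hDcunit : IsUnit Dc.det := isUnit_iff_ne_zero.mpr hDcdet
  have hAinv : A⁻¹ = Tc * Dc⁻¹ * Tcᵀ := by
    apply inv_eq_right_inv
    have hATc : A * Tc = Tcᵀ⁻¹ * Dc := by
      have h0 : Tcᵀ⁻¹ * (Tcᵀ * A * Tc) = Tcᵀ⁻¹ * Dc := by rw [hKey]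
      calc A * Tc = (Tcᵀ⁻¹ * Tcᵀ) * (A * Tc) := by
            rw [nonsing_inv_mul _ hTcTunit, one_mul]
      _ = Tcᵀ⁻¹ * (Tcᵀ * A * Tc) := by simp only [mul_assoc]
      _ = Tcᵀ⁻¹ * Dc := h0
    calc A * (Tc * Dc⁻¹ * Tcᵀ) = (A * Tc) * (Dc⁻¹ * Tcᵀ) := by simp only [mul_assoc]
    _ = Tcᵀ⁻¹ * (Dc * Dc⁻¹) * Tcᵀ := by rw [hATc]; simp only [mul_assoc]
    _ = 1 := by
        rw [mul_nonsing_inv _ hDcunit, mul_one, nonsing_inv_mul _ hTcTunit]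
  -- data for the 1-dimensional integrals
  set bv : Fin d → ℂ := fun j => dvec j / 2 with hbvdef
  have hdvecne : ∀ i, dvec i ≠ 0 := by
    intro i h
    have := congrArg Complex.re h
    simp [hdvecdef] at this
  have hbvre : ∀ i, 0 < (bv i).re := by
    intro i
    rw [hbvdef]
    simp only [hdvecdef]
    rw [Complex.div_re]
    norm_num
  have hbvne : ∀ i, bv i ≠ 0 := fun i => by
    rw [hbvdef]; exact div_ne_zero (hdvecne i) two_ne_zero
  set γ : Fin d → ℂ := Tcᵀ *ᵥ β with hγdef
  -- the exponent identity
  have hexps : ∑ i, γ i ^ 2 / (4 * bv i)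
      = (1/2 : ℂ) * dotProduct (A⁻¹.mulVec β) β := by
    have h1 : A⁻¹ *ᵥ β = Tc *ᵥ (Dc⁻¹ *ᵥ γ) := by
      rw [hAinv, ← mulVec_mulVec, ← mulVec_mulVec]
    have hDcinv : Dc⁻¹ = diagonal (fun i => (dvec i)⁻¹) := by
      apply inv_eq_right_inv
      rw [hDcdef, diagonal_mul_diagonal]
      have : (fun i => dvec i * (dvec i)⁻¹) = fun _ => (1 : ℂ) :=
        funext fun i => mul_inv_cancel₀ (hdvecne i)
      rw [this, diagonal_one]
    have h2 : dotProduct (A⁻¹.mulVec β) β = (Dc⁻¹ *ᵥ γ) ⬝ᵥ γ := by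
      rw [h1, dotProduct_comm (Tc *ᵥ (Dc⁻¹ *ᵥ γ)) β, dotProduct_mulVec, ← mulVec_transpose,
        ← hγdef, dotProduct_comm γ (Dc⁻¹ *ᵥ γ)]
    rw [h2, hDcinv]
    rw [dotProduct, Finset.mul_sum]
    congr 1
    funext i
    rw [mulVec_diagonal]
    have h4 : (4 : ℂ) * bv i = 2 * dvec i := by rw [hbvdef]; ring
    rw [h4]
    have hd := hdvecne i
    field_simp
  -- prefactor
  set P : ℂ := ∏ i, ((π : ℂ) / bv i) ^ ((1 : ℂ)/2) with hPdef
  have h2pi : ((2 : ℝ) * π) ^ ((d : ℝ)/2) ≠ 0 := by positivity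
  set s : ℂ := ((|T.det| : ℝ) : ℂ) * P / ((((2 : ℝ) * π) ^ ((d : ℝ)/2) : ℝ) : ℂ) with hsdef
  have hCne : ((((2:ℝ) * π) ^ ((d : ℝ)/2) : ℝ) : ℂ) ≠ 0 := Complex.ofReal_ne_zero.mpr h2pi
  have h2pid : (((2:ℝ) * π) ^ d : ℝ) ≠ 0 := by positivity
  have h2pidC : ((((2:ℝ) * π) ^ d : ℝ) : ℂ) ≠ 0 := Complex.ofReal_ne_zero.mpr h2pid
  have hs2 : s ^ 2 = (A.det)⁻¹ := by
    have habs2 : (((|T.det| : ℝ) : ℂ)) ^ 2 = Tc.det ^ 2 := by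
      rw [hTcdeteq, ← Complex.ofReal_pow, ← Complex.ofReal_pow]
      exact congrArg _ (sq_abs _)
    have hP2 : P ^ 2 = ((((2:ℝ) * π) ^ d : ℝ) : ℂ) / Dc.det := by
      rw [hPdef, ← Finset.prod_pow]
      have heach : ∀ i : Fin d, (((π : ℂ) / bv i) ^ ((1:ℂ)/2)) ^ 2 = (π : ℂ) / bv i := by
        intro i
        have h1 : ((2:ℕ) : ℂ) * ((1:ℂ)/2) = 1 := by norm_num
        rw [← Complex.cpow_nat_mul, h1, Complex.cpow_one]
      rw [Finset.prod_congr rfl fun i _ => heach i]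
      have heach2 : ∀ i : Fin d, (π : ℂ) / bv i = 2 * (π : ℂ) / dvec i := by
        intro i
        rw [hbvdef]
        rw [div_div_eq_mul_div, mul_comm]
      rw [Finset.prod_congr rfl fun i _ => heach2 i, Finset.prod_div_distrib,
        Finset.prod_const, hDcdef, det_diagonal]
      push_cast
      rw [Finset.card_univ, Fintype.card_fin]
    have hC2 : (((((2:ℝ) * π) ^ ((d : ℝ)/2) : ℝ) : ℂ)) ^ 2 = ((((2:ℝ) * π) ^ d : ℝ) : ℂ) := by
      rw [← Complex.ofReal_pow]
      congr 1
      rw [← Real.rpow_natCast (((2:ℝ) * π) ^ ((d : ℝ)/2)) 2, ← Real.rpow_mul (by positivity)]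
      norm_num
    rw [hsdef, div_pow, mul_pow, habs2, hP2, hC2]
    have h2piC : (2 * (π:ℂ)) ^ d ≠ 0 :=
      pow_ne_zero _ (mul_ne_zero two_ne_zero (Complex.ofReal_ne_zero.mpr Real.pi_ne_zero))
    field_simp
    linear_combination hdetA
  refine ⟨hAunit, s, hs2, ?_⟩
  -- the integral computation
  set G : (Fin d → ℝ) → ℂ := fun v =>
    Complex.exp (-(1/2) * dotProduct (A.mulVec fun i => ((v i : ℝ) : ℂ))
        (fun i => ((v i : ℝ) : ℂ))
      + dotProduct β (fun i => ((v i : ℝ) : ℂ))) with hGdef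
  have hstep1 : (∫ x : EuclideanSpace ℝ (Fin d),
      Complex.exp (-(1/2) * dotProduct (A.mulVec fun i => (x i : ℂ)) (fun i => (x i : ℂ))
        + dotProduct β (fun i => (x i : ℂ))))
      = ∫ v : Fin d → ℝ, G v := by
    have hmp := (EuclideanSpace.volume_preserving_symm_measurableEquiv_toLp (Fin d)).symm
    rw [← hmp.integral_comp (MeasurableEquiv.measurableEmbedding _)]
    rfl
  have hcont1 : Continuous fun v : Fin d → ℝ =>
      -(1/2 : ℂ) * dotProduct (A.mulVec fun i => ((v i : ℝ) : ℂ))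
        (fun i => ((v i : ℝ) : ℂ))
      + dotProduct β (fun i => ((v i : ℝ) : ℂ)) := by
    simp only [dotProduct, Matrix.mulVec]
    fun_prop
  have hGcont : Continuous G := Complex.continuous_exp.comp hcont1
  have hLdet : LinearMap.det (Matrix.toLin' T) ≠ 0 := by
    rw [LinearMap.det_toLin']; exact hTdet
  have hmapvol : Measure.map (⇑(Matrix.toLin' T)) (volume : Measure (Fin d → ℝ))
      = ENNReal.ofReal |T.det⁻¹| • volume := by
    have := Measure.map_linearMap_addHaar_pi_eq_smul_addHaar hLdet
      (volume : Measure (Fin d → ℝ))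
    rwa [LinearMap.det_toLin'] at this
  have hTmeas : AEMeasurable (⇑(Matrix.toLin' T)) (volume : Measure (Fin d → ℝ)) :=
    (LinearMap.continuous_of_finiteDimensional _).measurable.aemeasurable
  have hcomp : ∫ v, G v ∂(Measure.map (⇑(Matrix.toLin' T)) volume)
      = ∫ y, G ((Matrix.toLin' T) y) :=
    integral_map hTmeas hGcont.aestronglyMeasurable
  rw [hmapvol, integral_smul_measure, ENNReal.toReal_ofReal (abs_nonneg _), abs_inv] at hcomp
  have habsne : |T.det| ≠ 0 := abs_ne_zero.mpr hTdet
  have hcov : ∫ v, G v = |T.det| • ∫ y, G ((Matrix.toLin' T) y) := by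
    rw [← hcomp, smul_smul, mul_inv_cancel₀ habsne, one_smul]
  have hpt : ∀ y : Fin d → ℝ, G ((Matrix.toLin' T) y)
      = Complex.exp (- ∑ i, bv i * ((y i : ℝ) : ℂ) ^ 2 + ∑ i, γ i * ((y i : ℝ) : ℂ)) := by
    intro y
    simp only [hGdef, toLin'_apply]
    have hyc : (fun i => (((T *ᵥ y) i : ℝ) : ℂ)) = Tc *ᵥ (fun i => ((y i : ℝ) : ℂ)) := by
      funext i
      exact RingHom.map_mulVec Complex.ofRealHom T y i
    rw [hyc]
    set yc : Fin d → ℂ := fun i => ((y i : ℝ) : ℂ) with hycdef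
    have hquad : dotProduct (A.mulVec (Tc *ᵥ yc)) (Tc *ᵥ yc)
        = dotProduct (Dc *ᵥ yc) yc := by
      rw [mulVec_mulVec, dotProduct_mulVec, vecMul_mulVec, transpose_mul, hsym, hKey]
      congr 1
      funext i
      rw [vecMul_diagonal, mulVec_diagonal]
      ring
    have hlin : dotProduct β (Tc *ᵥ yc) = ∑ i, γ i * yc i := by
      rw [dotProduct_mulVec, ← mulVec_transpose, ← hγdef]
      rfl
    rw [hquad, hlin]
    congr 1
    congr 1
    rw [hDcdef]
    simp only [dotProduct, mulVec_diagonal]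
    rw [neg_mul, Finset.mul_sum, ← Finset.sum_neg_distrib, ← Finset.sum_neg_distrib]
    refine Finset.sum_congr rfl fun i _ => ?_
    rw [hbvdef]
    ring
  have hint2 : (∫ y : Fin d → ℝ,
        Complex.exp (- ∑ i, bv i * ((y i : ℝ) : ℂ) ^ 2 + ∑ i, γ i * ((y i : ℝ) : ℂ)))
      = ∏ i, ((π : ℂ) / bv i) ^ ((1:ℂ)/2) * Complex.exp (γ i ^ 2 / (4 * bv i)) :=
    GaussianFourier.integral_cexp_neg_sum_mul_add hbvre γ
  rw [hstep1, hcov]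
  rw [show (fun y : Fin d → ℝ => G ((Matrix.toLin' T) y))
      = fun y : Fin d → ℝ => Complex.exp
          (- ∑ i, bv i * ((y i : ℝ) : ℂ) ^ 2 + ∑ i, γ i * ((y i : ℝ) : ℂ)) from funext hpt]
  rw [hint2, Finset.prod_mul_distrib, ← Complex.exp_sum, ← hPdef, hexps]
  rw [Complex.real_smul, hsdef]
  field_simp
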